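/- The Lebesgue–Poisson measure factorizes over disjoint sets: for disjoint measurable sets A, B with finite σ-measure, the map (ξ, η) ↦ ξ ∪ η pushes λ_A ⊗ λ_B forward to λ_{A∪B} on finite configurations of A ∪ B. -/

import Mathlib

open MeasureTheory
open scoped ENNReal

/-- The Lebesgue–Poisson measure built from the intensity measure `σ` restricted to `Y`,
realized on the space of finite point measures: it is `Σ_{n≥0} (1/n!) (σ|_Y)^{⊗n}`,
pushed forward under the map sending an ordered tuple to the corresponding sum of
Dirac measures (a finite configuration). -/
noncomputable def lebesguePoisson {X : Type*} [MeasurableSpace X] (σ : Measure X) (Y : Set X) :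
    Measure (Measure X) :=
  Measure.sum fun n : ℕ =>
    ((n.factorial : ℝ≥0∞))⁻¹ •
      Measure.map (fun x : Fin n → X => ∑ i, Measure.dirac (x i))
        (Measure.pi fun _ : Fin n => σ.restrict Y)

section Aux

variable {X : Type*} [MeasurableSpace X]

lemma measurable_sumDirac {ι : Type*} [Fintype ι] :
    Measurable fun x : ι → X => ∑ i, Measure.dirac (x i) := by
  refine Measure.measurable_of_measurable_coe _ fun s hs => ?_
  simp only [Measure.finset_sum_apply]
  exact Finset.measurable_sum _ fun i _ =>
    (Measure.measurable_coe hs).comp (Measure.measurable_dirac.comp (measurable_pi_apply i))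

lemma measurable_addMeasure :
    Measurable fun p : Measure X × Measure X => p.1 + p.2 := by
  refine Measure.measurable_of_measurable_coe _ fun s hs => ?_
  simp only [Measure.coe_add, Pi.add_apply]
  exact ((Measure.measurable_coe hs).comp measurable_fst).add
    ((Measure.measurable_coe hs).comp measurable_snd)

lemma measurable_pairSumDirac {ι κ : Type*} [Fintype ι] [Fintype κ] :
    Measurable fun p : (ι → X) × (κ → X) =>
      (∑ i, Measure.dirac (p.1 i)) + ∑ j, Measure.dirac (p.2 j) :=
  measurable_addMeasure.comp
    ((measurable_sumDirac.comp measurable_fst).prodMk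
      (measurable_sumDirac.comp measurable_snd))

/-- Reindexing a product measure along an equivalence does not change the
pushforward configuration measure. -/
lemma map_sumDirac_pi_comp {ι κ : Type*} [Fintype ι] [Fintype κ] (e : ι ≃ κ)
    (μ : κ → Measure X) [∀ k, SigmaFinite (μ k)] :
    Measure.map (fun x : κ → X => ∑ k, Measure.dirac (x k)) (Measure.pi μ)
      = Measure.map (fun x : ι → X => ∑ i, Measure.dirac (x i))
          (Measure.pi fun i => μ (e i)) := by
  rw [← (measurePreserving_piCongrLeft μ e).map_eq,
    Measure.map_map measurable_sumDirac (MeasurableEquiv.measurable _)]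
  congr 1
  funext x
  simp only [Function.comp_apply]
  rw [← Equiv.sum_comp e
    (fun k => Measure.dirac ((MeasurableEquiv.piCongrLeft (fun _ => X) e) x k))]
  refine Finset.sum_congr rfl fun i _ => ?_
  congr 1
  simp [MeasurableEquiv.piCongrLeft]

/-- Splitting a product measure over a sum type. -/
lemma map_sumDirac_pi_sum {ι κ : Type*} [Fintype ι] [Fintype κ]
    (μ ν : Measure X) [SigmaFinite μ] [SigmaFinite ν] :
    Measure.map (fun x : ι ⊕ κ → X => ∑ s, Measure.dirac (x s))
        (Measure.pi fun s : ι ⊕ κ => Sum.elim (fun _ : ι => μ) (fun _ : κ => ν) s)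
      = Measure.map (fun p : (ι → X) × (κ → X) =>
            (∑ i, Measure.dirac (p.1 i)) + ∑ j, Measure.dirac (p.2 j))
          ((Measure.pi fun _ : ι => μ).prod (Measure.pi fun _ : κ => ν)) := by
  haveI : ∀ s : ι ⊕ κ,
      SigmaFinite ((fun s => Sum.elim (fun _ : ι => μ) (fun _ : κ => ν) s) s) := by
    rintro (i | j) <;> dsimp <;> infer_instance
  have h := (measurePreserving_sumPiEquivProdPi_symm
    (fun s : ι ⊕ κ => (Sum.elim (fun _ : ι => μ) (fun _ : κ => ν) s : Measure X))).map_eq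
  rw [show (Measure.pi fun s : ι ⊕ κ => Sum.elim (fun _ : ι => μ) (fun _ : κ => ν) s)
      = _ from h.symm,
    Measure.map_map measurable_sumDirac (MeasurableEquiv.measurable _)]
  congr 1
  funext p
  simp only [Function.comp_apply]
  rw [Fintype.sum_sum_type]
  rfl

/-- The "ordered pair of configurations" pushforward. -/
noncomputable def rho (μ ν : Measure X) (m k : ℕ) : Measure (Measure X) :=
  Measure.map (fun p : (Fin m → X) × (Fin k → X) =>
      (∑ i, Measure.dirac (p.1 i)) + ∑ j, Measure.dirac (p.2 j))
    ((Measure.pi fun _ : Fin m => μ).prod (Measure.pi fun _ : Fin k => ν))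

lemma rho_comp {ι κ : Type*} [Fintype ι] [Fintype κ]
    (μ ν : Measure X) [SigmaFinite μ] [SigmaFinite ν]
    (e : Fin (Fintype.card ι) ≃ ι) (e' : Fin (Fintype.card κ) ≃ κ) :
    Measure.map (fun p : (ι → X) × (κ → X) =>
        (∑ i, Measure.dirac (p.1 i)) + ∑ j, Measure.dirac (p.2 j))
      ((Measure.pi fun _ : ι => μ).prod (Measure.pi fun _ : κ => ν))
      = rho μ ν (Fintype.card ι) (Fintype.card κ) := by
  have h1 := measurePreserving_piCongrLeft (fun _ : ι => μ) e
  have h2 := measurePreserving_piCongrLeft (fun _ : κ => ν) e'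
  have h := (h1.prod h2).map_eq
  rw [← h, Measure.map_map measurable_pairSumDirac
    ((MeasurableEquiv.measurable _).prodMap (MeasurableEquiv.measurable _))]
  congr 1
  funext p
  simp only [Function.comp_apply, Prod.map_fst, Prod.map_snd]
  congr 1
  · rw [← Equiv.sum_comp e
      (fun i => Measure.dirac ((MeasurableEquiv.piCongrLeft (fun _ => X) e) p.1 i))]
    refine Finset.sum_congr rfl fun i _ => ?_
    congr 1
    simp [MeasurableEquiv.piCongrLeft]
  · rw [← Equiv.sum_comp e'
      (fun j => Measure.dirac ((MeasurableEquiv.piCongrLeft (fun _ => X) e') p.2 j))]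
    refine Finset.sum_congr rfl fun j _ => ?_
    congr 1
    simp [MeasurableEquiv.piCongrLeft]

lemma map_sumDirac_pi_ite (μ ν : Measure X) [SigmaFinite μ] [SigmaFinite ν]
    (n : ℕ) (S : Finset (Fin n)) :
    Measure.map (fun x : Fin n → X => ∑ i, Measure.dirac (x i))
        (Measure.pi fun i => if i ∈ S then μ else ν)
      = rho μ ν S.card Sᶜ.card := by
  classical
  haveI : ∀ k : Fin n, SigmaFinite ((fun i => if i ∈ S then μ else ν) k) := by
    intro k; dsimp only; split <;> infer_instance
  rw [map_sumDirac_pi_comp (Equiv.sumCompl (· ∈ S)) (fun i => if i ∈ S then μ else ν)]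
  have hfam : (fun s : {i // i ∈ S} ⊕ {i // i ∉ S} =>
      (if Equiv.sumCompl (· ∈ S) s ∈ S then μ else ν))
      = fun s => Sum.elim (fun _ : {i // i ∈ S} => μ) (fun _ : {i // i ∉ S} => ν) s := by
    funext s
    rcases s with ⟨i, hi⟩ | ⟨i, hi⟩
    · simp [hi]
    · simp [hi]
  rw [show (Measure.pi fun s : {i // i ∈ S} ⊕ {i // i ∉ S} =>
        if Equiv.sumCompl (· ∈ S) s ∈ S then μ else ν)
      = Measure.pi fun s => Sum.elim (fun _ : {i // i ∈ S} => μ)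
        (fun _ : {i // i ∉ S} => ν) s from by rw [hfam],
    map_sumDirac_pi_sum]
  have hc1 : Fintype.card {i // i ∈ S} = S.card := Fintype.card_coe S
  have hc2 : Fintype.card {i // i ∉ S} = Sᶜ.card := by
    rw [← Fintype.card_coe Sᶜ]
    exact Fintype.card_congr (Equiv.subtypeEquivRight fun i => (Finset.mem_compl).symm)
  rw [← hc1, ← hc2]
  exact rho_comp μ ν (Fintype.equivFinOfCardEq rfl).symm (Fintype.equivFinOfCardEq rfl).symm

/-- Binomial decomposition of the product of a sum of two measures. -/
lemma pi_add_eq_sum (μ ν : Measure X) [IsFiniteMeasure μ] [IsFiniteMeasure ν] (n : ℕ) :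
    (Measure.pi fun _ : Fin n => μ + ν)
      = ∑ S : Finset (Fin n), Measure.pi fun i => if i ∈ S then μ else ν := by
  classical
  haveI : ∀ (S : Finset (Fin n)) (k : Fin n),
      SigmaFinite ((fun i => if i ∈ S then μ else ν) k) := by
    intro S k; dsimp only; split <;> infer_instance
  refine Measure.pi_eq fun s hs => ?_
  rw [Measure.finset_sum_apply]
  simp_rw [Measure.pi_pi]
  have hsplit : ∀ S : Finset (Fin n),
      (∏ i, (if i ∈ S then μ else ν) (s i))
        = (∏ i ∈ S, μ (s i)) * ∏ i ∈ Sᶜ, ν (s i) := by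
    intro S
    rw [← Finset.prod_mul_prod_compl S (fun i => (if i ∈ S then μ else ν) (s i))]
    congr 1
    · exact Finset.prod_congr rfl fun i hi => by rw [if_pos hi]
    · exact Finset.prod_congr rfl fun i hi => by
        rw [if_neg (Finset.mem_compl.mp hi)]
  simp_rw [hsplit]
  have := Fintype.prod_add (fun i => μ (s i)) (fun i => ν (s i))
  simp only [Measure.coe_add, Pi.add_apply] at this ⊢
  rw [this]

lemma smul_prod' {Y Z : Type*} [MeasurableSpace Y] [MeasurableSpace Z]
    (c : ℝ≥0∞) (μ : Measure Y) (ν : Measure Z) [SFinite μ] [SFinite ν] :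
    (c • μ).prod ν = c • μ.prod ν := by
  ext s hs
  rw [Measure.prod_apply hs, Measure.smul_apply, Measure.prod_apply hs,
    lintegral_smul_measure, smul_eq_mul]

lemma prod_smul' {Y Z : Type*} [MeasurableSpace Y] [MeasurableSpace Z]
    (c : ℝ≥0∞) (μ : Measure Y) (ν : Measure Z) [SFinite μ] [SFinite ν] :
    μ.prod (c • ν) = c • μ.prod ν := by
  ext s hs
  rw [Measure.prod_apply hs, Measure.smul_apply, Measure.prod_apply hs]
  simp only [Measure.smul_apply, smul_eq_mul]
  rw [lintegral_const_mul _ (measurable_measure_prodMk_left hs)]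

lemma coeff_eq {n m : ℕ} (h : m ≤ n) :
    (n.choose m : ℝ≥0∞) * ((n.factorial : ℝ≥0∞))⁻¹
      = ((m.factorial : ℝ≥0∞))⁻¹ * (((n - m).factorial : ℝ≥0∞))⁻¹ := by
  have key : ((n.choose m : ℕ) : ℝ≥0∞) * (m.factorial : ℝ≥0∞) * ((n - m).factorial : ℝ≥0∞)
      = (n.factorial : ℝ≥0∞) := by
    rw [← Nat.cast_mul, ← Nat.cast_mul, Nat.choose_mul_factorial_mul_factorial h]
  have ha0 : ((n.choose m : ℕ) : ℝ≥0∞) ≠ 0 := Nat.cast_ne_zero.mpr (Nat.choose_pos h).ne'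
  have hat : ((n.choose m : ℕ) : ℝ≥0∞) ≠ ⊤ := ENNReal.natCast_ne_top _
  have hb0 : ((m.factorial : ℕ) : ℝ≥0∞) ≠ 0 := Nat.cast_ne_zero.mpr m.factorial_ne_zero
  have hbt : ((m.factorial : ℕ) : ℝ≥0∞) ≠ ⊤ := ENNReal.natCast_ne_top _
  rw [← key, ENNReal.mul_inv (Or.inl (mul_ne_zero ha0 hb0))
      (Or.inl (ENNReal.mul_ne_top hat hbt)),
    ENNReal.mul_inv (Or.inl ha0) (Or.inl hat), ← mul_assoc, ← mul_assoc,
    ENNReal.mul_inv_cancel ha0 hat, one_mul]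

lemma group_sum (μ ν : Measure X) [IsFiniteMeasure μ] [IsFiniteMeasure ν] (n : ℕ) :
    (∑ S : Finset (Fin n), ((n.factorial : ℝ≥0∞))⁻¹ • rho μ ν S.card Sᶜ.card)
      = ∑ m ∈ Finset.range (n + 1),
          (((m.factorial : ℝ≥0∞))⁻¹ * (((n - m).factorial : ℝ≥0∞))⁻¹) • rho μ ν m (n - m) := by
  classical
  have h1 : ∀ S : Finset (Fin n), Sᶜ.card = n - S.card := by
    intro S; rw [Finset.card_compl, Fintype.card_fin]
  simp_rw [h1]
  rw [show (Finset.univ : Finset (Finset (Fin n))) = (Finset.univ : Finset (Fin n)).powerset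
      from Finset.powerset_univ.symm]
  rw [Finset.sum_powerset_apply_card
    (fun m => ((n.factorial : ℝ≥0∞))⁻¹ • rho μ ν m (n - m))]
  simp only [Finset.card_univ, Fintype.card_fin]
  refine Finset.sum_congr rfl fun m hm => ?_
  rw [← Nat.cast_smul_eq_nsmul ℝ≥0∞, smul_smul, coeff_eq (Nat.lt_succ_iff.mp
    (Finset.mem_range.mp hm))]

end Aux

theorem lebesguePoisson_factorizes {X : Type*} [MeasurableSpace X] (σ : Measure X)
    (A B : Set X) (hA : MeasurableSet A) (hB : MeasurableSet B) (hdisj : Disjoint A B)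
    (hAfin : σ A ≠ ⊤) (hBfin : σ B ≠ ⊤) :
    Measure.map (fun p : Measure X × Measure X => p.1 + p.2)
        ((lebesguePoisson σ A).prod (lebesguePoisson σ B))
      = lebesguePoisson σ (A ∪ B) := by
  classical
  haveI hfA : IsFiniteMeasure (σ.restrict A) :=
    ⟨by rw [Measure.restrict_apply_univ]; exact hAfin.lt_top⟩
  haveI hfB : IsFiniteMeasure (σ.restrict B) :=
    ⟨by rw [Measure.restrict_apply_univ]; exact hBfin.lt_top⟩
  haveI hmapA : ∀ n : ℕ, IsFiniteMeasure
      (Measure.map (fun x : Fin n → X => ∑ i, Measure.dirac (x i))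
        (Measure.pi fun _ : Fin n => σ.restrict A)) :=
    fun n => Measure.isFiniteMeasure_map _ _
  haveI hmapB : ∀ n : ℕ, IsFiniteMeasure
      (Measure.map (fun x : Fin n → X => ∑ i, Measure.dirac (x i))
        (Measure.pi fun _ : Fin n => σ.restrict B)) :=
    fun n => Measure.isFiniteMeasure_map _ _
  have hL : Measure.map (fun p : Measure X × Measure X => p.1 + p.2)
      ((lebesguePoisson σ A).prod (lebesguePoisson σ B))
    = Measure.sum fun p : ℕ × ℕ =>
        (((p.1.factorial : ℝ≥0∞))⁻¹ * ((p.2.factorial : ℝ≥0∞))⁻¹) •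
          rho (σ.restrict A) (σ.restrict B) p.1 p.2 := by
    rw [lebesguePoisson, lebesguePoisson, Measure.prod_sum,
      Measure.map_sum measurable_addMeasure.aemeasurable]
    congr 1
    funext p
    rw [smul_prod', prod_smul', smul_smul, Measure.map_smul,
      Measure.map_prod_map _ _ measurable_sumDirac measurable_sumDirac,
      Measure.map_map measurable_addMeasure (measurable_sumDirac.prodMap measurable_sumDirac)]
    rfl
  have hR : lebesguePoisson σ (A ∪ B)
      = Measure.sum fun n : ℕ => ∑ m ∈ Finset.range (n + 1),
          (((m.factorial : ℝ≥0∞))⁻¹ * (((n - m).factorial : ℝ≥0∞))⁻¹) •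
            rho (σ.restrict A) (σ.restrict B) m (n - m) := by
    rw [lebesguePoisson]
    congr 1
    funext n
    haveI : ∀ (S : Finset (Fin n)) (k : Fin n), SigmaFinite
        ((fun i => if i ∈ S then σ.restrict A else σ.restrict B) k) := by
      intro S k; dsimp only; split <;> infer_instance
    rw [Measure.restrict_union hdisj hB, pi_add_eq_sum, ← Measure.sum_fintype,
      Measure.map_sum measurable_sumDirac.aemeasurable, Measure.sum_fintype, Finset.smul_sum]
    simp_rw [map_sumDirac_pi_ite]
    exact group_sum (σ.restrict A) (σ.restrict B) n
  rw [hL, hR]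
  ext s hs
  rw [Measure.sum_apply _ hs, Measure.sum_apply _ hs,
    ← Finset.HasAntidiagonal.sigmaAntidiagonalEquivProd.tsum_eq, ENNReal.tsum_sigma']
  refine tsum_congr fun n => ?_
  rw [tsum_fintype]
  simp only [Finset.HasAntidiagonal.sigmaAntidiagonalEquivProd_apply]
  rw [ Finset.sum_coe_sort (Finset.HasAntidiagonal.antidiagonal n)
      (fun p : ℕ × ℕ => ((((p.1.factorial : ℝ≥0∞))⁻¹ * ((p.2.factorial : ℝ≥0∞))⁻¹) •
        rho (σ.restrict A) (σ.restrict B) p.1 p.2) s),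
    Finset.Nat.sum_antidiagonal_eq_sum_range_succ_mk, Measure.finset_sum_apply]
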